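/- Let n be a natural number and let φ be a ℂ-algebra automorphism of the Laurent polynomial algebra ℂ[ℤⁿ] (the monoid algebra AddMonoidAlgebra ℂ (Fin n → ℤ)). Then there exist a ℤ-linear automorphism M of ℤⁿ = (Fin n → ℤ) and a group homomorphism χ : ℤⁿ → ℂˣ (written additively to multiplicatively) such that for every a ∈ ℤⁿ one has φ(single a 1) = χ(a) • single (M a) 1, where single a 1 denotes the monomial with exponent vector a. -/

import Mathlib

instance (n : ℕ) : WellFoundedLT (Fin n) := inferInstance

private lemma uniqueAdd_max' {A : Type*} [AddCommGroup A] [LinearOrder A] [IsOrderedAddMonoid A]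
    {s t : Finset A} (hs : s.Nonempty) (ht : t.Nonempty) :
    UniqueAdd s t (s.max' hs) (t.max' ht) := by
  intro a b ha hb hab
  have h1 : a ≤ s.max' hs := Finset.le_max' s a ha
  have h2 : b ≤ t.max' ht := Finset.le_max' t b hb
  constructor
  · by_contra hne
    exact absurd hab (ne_of_lt (add_lt_add_of_lt_of_le (lt_of_le_of_ne h1 hne) h2))
  · by_contra hne
    exact absurd hab (ne_of_lt (add_lt_add_of_le_of_lt h1 (lt_of_le_of_ne h2 hne)))

private lemma uniqueAdd_min' {A : Type*} [AddCommGroup A] [LinearOrder A] [IsOrderedAddMonoid A]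
    {s t : Finset A} (hs : s.Nonempty) (ht : t.Nonempty) :
    UniqueAdd s t (s.min' hs) (t.min' ht) := by
  intro a b ha hb hab
  have h1 : s.min' hs ≤ a := Finset.min'_le s a ha
  have h2 : t.min' ht ≤ b := Finset.min'_le t b hb
  constructor
  · by_contra hne
    exact absurd hab (ne_of_gt (add_lt_add_of_lt_of_le (lt_of_le_of_ne h1 (Ne.symm hne)) h2))
  · by_contra hne
    exact absurd hab (ne_of_gt (add_lt_add_of_le_of_lt h1 (lt_of_le_of_ne h2 (Ne.symm hne))))

private lemma unit_is_single {A : Type*} [AddCommGroup A] [LinearOrder A] [IsOrderedAddMonoid A]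
    (f g : AddMonoidAlgebra ℂ A) (h : f * g = 1) :
    ∃ (a : A) (c : ℂˣ), f = AddMonoidAlgebra.single a (c : ℂ) := by
  have hf : f ≠ 0 := by rintro rfl; rw [zero_mul] at h; exact one_ne_zero h.symm
  have hg : g ≠ 0 := by rintro rfl; rw [mul_zero] at h; exact one_ne_zero h.symm
  have hfs : f.coeff.support.Nonempty := Finsupp.support_nonempty_iff.mpr (by simpa using hf)
  have hgs : g.coeff.support.Nonempty := Finsupp.support_nonempty_iff.mpr (by simpa using hg)
  set af := f.coeff.support.max' hfs with haf
  set ag := g.coeff.support.max' hgs with hag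
  set bf := f.coeff.support.min' hfs with hbf
  set bg := g.coeff.support.min' hgs with hbg
  have supp1 : (1 : AddMonoidAlgebra ℂ A).coeff.support = {0} := by
    rw [AddMonoidAlgebra.one_def, AddMonoidAlgebra.coeff_single]
    exact Finsupp.support_single_ne_zero _ one_ne_zero
  have hmax : af + ag = 0 := by
    have h1 : (f * g).coeff (af + ag) = f.coeff af * g.coeff ag :=
      AddMonoidAlgebra.coeff_mul_add_of_uniqueAdd (uniqueAdd_max' hfs hgs)
    have hne : (f * g).coeff (af + ag) ≠ 0 := by
      rw [h1]
      exact mul_ne_zero (Finsupp.mem_support_iff.mp (Finset.max'_mem _ hfs))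
        (Finsupp.mem_support_iff.mp (Finset.max'_mem _ hgs))
    have := Finsupp.mem_support_iff.mpr hne
    rw [h, supp1] at this
    simpa using this
  have hmin : bf + bg = 0 := by
    have h1 : (f * g).coeff (bf + bg) = f.coeff bf * g.coeff bg :=
      AddMonoidAlgebra.coeff_mul_add_of_uniqueAdd (uniqueAdd_min' hfs hgs)
    have hne : (f * g).coeff (bf + bg) ≠ 0 := by
      rw [h1]
      exact mul_ne_zero (Finsupp.mem_support_iff.mp (Finset.min'_mem _ hfs))
        (Finsupp.mem_support_iff.mp (Finset.min'_mem _ hgs))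
    have := Finsupp.mem_support_iff.mpr hne
    rw [h, supp1] at this
    simpa using this
  have hba : bf = af := by
    have h1 : bf ≤ af := Finset.min'_le _ _ (Finset.max'_mem _ hfs)
    have h2 : bg ≤ ag := Finset.min'_le _ _ (Finset.max'_mem _ hgs)
    have : af ≤ bf := by
      have hA : af = -ag := eq_neg_of_add_eq_zero_left hmax
      have hB : bf = -bg := eq_neg_of_add_eq_zero_left hmin
      rw [hA, hB]
      exact neg_le_neg h2
    exact le_antisymm h1 this
  have hsub : f.coeff.support ⊆ {af} := by
    intro s hs
    have h1 : s ≤ af := Finset.le_max' _ _ hs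
    have h2 : bf ≤ s := Finset.min'_le _ _ hs
    rw [hba] at h2
    rw [Finset.mem_singleton]
    exact le_antisymm h1 h2
  have hfe : f = AddMonoidAlgebra.single af (f.coeff af) := by
    apply AddMonoidAlgebra.coeff_injective
    rw [AddMonoidAlgebra.coeff_single]
    exact Finsupp.support_subset_singleton.mp hsub
  have hne : f.coeff af ≠ 0 := Finsupp.mem_support_iff.mp (Finset.max'_mem _ hfs)
  exact ⟨af, Units.mk0 (f.coeff af) hne, hfe⟩

/-- Every `ℂ`-algebra automorphism `φ` of the Laurent polynomial algebra
`ℂ[ℤⁿ] = AddMonoidAlgebra ℂ (Fin n → ℤ)` is "monomial": there are a `ℤ`-linear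
automorphism `M` of `ℤⁿ` and a character `χ : ℤⁿ → ℂˣ` such that
`φ (single a 1) = χ a • single (M a) 1` for all `a`. -/
theorem algAut_addMonoidAlgebra_eq_monomial
    (n : ℕ)
    (φ : AddMonoidAlgebra ℂ (Fin n → ℤ) ≃ₐ[ℂ] AddMonoidAlgebra ℂ (Fin n → ℤ)) :
    ∃ (M : (Fin n → ℤ) ≃ₗ[ℤ] (Fin n → ℤ))
      (χ : Multiplicative (Fin n → ℤ) →* ℂˣ),
      ∀ a : Fin n → ℤ,
        φ (AddMonoidAlgebra.single a 1)
          = χ (Multiplicative.ofAdd a) • AddMonoidAlgebra.single (M a) 1 := by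
  classical
  set G := (Fin n → ℤ)
  have keyφ : ∀ (ψ : AddMonoidAlgebra ℂ G ≃ₐ[ℂ] AddMonoidAlgebra ℂ G) (a : G),
      ∃ (b : G) (c : ℂˣ), ψ (AddMonoidAlgebra.single a 1) = AddMonoidAlgebra.single b (c : ℂ) := by
    intro ψ a
    have hmul : (AddMonoidAlgebra.single a 1 : AddMonoidAlgebra ℂ G) *
        AddMonoidAlgebra.single (-a) 1 = 1 := by
      rw [AddMonoidAlgebra.single_mul_single, add_neg_cancel, one_mul,
        AddMonoidAlgebra.one_def]
    have h1 : ψ (AddMonoidAlgebra.single a 1) * ψ (AddMonoidAlgebra.single (-a) 1) = 1 := by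
      rw [← map_mul, hmul, map_one]
    obtain ⟨b, c, hbc⟩ := unit_is_single (A := Lex G)
      (ψ (AddMonoidAlgebra.single a 1)) (ψ (AddMonoidAlgebra.single (-a) 1)) h1
    exact ⟨ofLex b, c, hbc⟩
  choose m c hmc using keyφ φ
  choose m' c' hm'c' using keyφ φ.symm
  -- injectivity of nonzero singles
  have singles : ∀ (a b : G) (r s : ℂ), r ≠ 0 →
      (AddMonoidAlgebra.single a r : AddMonoidAlgebra ℂ G) = AddMonoidAlgebra.single b s → a = b ∧ r = s := by
    intro a b r s hr he
    rcases AddMonoidAlgebra.single_inj.mp he with ⟨h1, h2⟩ | ⟨h1, _⟩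
    · exact ⟨h1, h2⟩
    · exact absurd h1 hr
  have hadd : ∀ a b : G, m (a + b) = m a + m b ∧ c (a + b) = c a * c b := by
    intro a b
    have h1 : φ (AddMonoidAlgebra.single (a + b) 1) =
        AddMonoidAlgebra.single (m a + m b) ((c a : ℂ) * (c b : ℂ)) := by
      have : (AddMonoidAlgebra.single (a + b) 1 : AddMonoidAlgebra ℂ G) =
          AddMonoidAlgebra.single a 1 * AddMonoidAlgebra.single b 1 := by
        rw [AddMonoidAlgebra.single_mul_single, one_mul]
      rw [this, map_mul, hmc a, hmc b, AddMonoidAlgebra.single_mul_single]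
    rw [hmc (a + b)] at h1
    obtain ⟨he, hc⟩ := singles _ _ _ _ (Units.ne_zero _) h1
    exact ⟨he, Units.ext (by exact_mod_cast hc)⟩
  -- smul lemma
  have hsmul : ∀ (ψ : AddMonoidAlgebra ℂ G ≃ₐ[ℂ] AddMonoidAlgebra ℂ G) (b : G) (r : ℂ),
      ψ (AddMonoidAlgebra.single b r) = r • ψ (AddMonoidAlgebra.single b 1) := by
    intro ψ b r
    rw [← map_smul]
    congr 1
    rw [AddMonoidAlgebra.smul_single', mul_one]
  have left_inv : ∀ a : G, m' (m a) = a := by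
    intro a
    have h1 : φ.symm (φ (AddMonoidAlgebra.single a 1)) = AddMonoidAlgebra.single a 1 :=
      φ.symm_apply_apply _
    rw [hmc a, hsmul φ.symm, hm'c', AddMonoidAlgebra.smul_single'] at h1
    exact (singles _ _ _ _ (by simp) h1).1
  have right_inv : ∀ a : G, m (m' a) = a := by
    intro a
    have h1 : φ (φ.symm (AddMonoidAlgebra.single a 1)) = AddMonoidAlgebra.single a 1 :=
      φ.apply_symm_apply _
    rw [hm'c' a, hsmul φ, hmc, AddMonoidAlgebra.smul_single'] at h1
    exact (singles _ _ _ _ (by simp) h1).1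
  let E : G ≃+ G :=
    { toFun := m, invFun := m', left_inv := left_inv, right_inv := right_inv,
      map_add' := fun a b => (hadd a b).1 }
  refine ⟨E.toIntLinearEquiv, MonoidHom.mk' (fun x => c x.toAdd)
    (fun x y => (hadd x.toAdd y.toAdd).2), fun a => ?_⟩
  rw [hmc a]
  show AddMonoidAlgebra.single (m a) ((c a : ℂ)) = c a • AddMonoidAlgebra.single (m a) 1
  rw [Units.smul_def, AddMonoidAlgebra.smul_single', mul_one]
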